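/- For any coweight λ = v(λ^{++}) ∈ Y⁺ and any w ∈ Wᵛ: #{α ∈ Inv(w⁻¹) : ⟨λ,α⟩ ≥ 0} − #{α ∈ Inv(w⁻¹) : ⟨λ,α⟩ < 0} = ℓ_{v^λ}(w) = ℓ((v^λ)⁻¹w) − ℓ(v^λ). Consequently the affine length satisfies ℓᵃ(π^λ w) = 2ht(λ^{++}) + ℓ_{v^λ}(w). -/

import Mathlib

/-- Sign of an integer, with the convention `isgn 0 = 1`. -/
def isgn (n : ℤ) : ℤ := if 0 ≤ n then 1 else -1

/-- A Kac–Moody root datum: a finite index set `I`, a generalized Cartan matrix `A`,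
free `ℤ`-modules `X` and `Y` of finite rank in perfect duality `pairE`, and linearly
independent families of simple roots `α` and simple coroots `αv` with
`⟨αv i, α j⟩ = A i j`. -/
structure KM (I X Y : Type*) [Fintype I] [AddCommGroup X] [AddCommGroup Y] where
  A : I → I → ℤ
  pairE : Y ≃+ (X →+ ℤ)
  α : I → X
  αv : I → Y
  pair_av_a : ∀ i j, pairE (αv i) (α j) = A i j
  A_diag : ∀ i, A i i = 2
  A_offdiag : ∀ i j, i ≠ j → A i j ≤ 0
  A_zero_iff : ∀ i j, A i j = 0 → A j i = 0
  freeX : Module.Free ℤ X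
  freeY : Module.Free ℤ Y
  finX : Module.Finite ℤ X
  finY : Module.Finite ℤ Y
  indep_α : LinearIndependent ℤ α
  indep_αv : LinearIndependent ℤ αv

/-- The multiplicative group structure on `AddAut A` (composition), as in the older Mathlib. -/
instance addAutGroupOld (A : Type*) [Add A] : Group (AddAut A) where
  mul g h := AddEquiv.trans h g
  one := AddEquiv.refl _
  inv := AddEquiv.symm
  mul_assoc _ _ _ := rfl
  one_mul _ := rfl
  mul_one _ := rfl
  inv_mul_cancel := AddEquiv.self_trans_symm

namespace KM

variable {I X Y : Type*} [Fintype I] [AddCommGroup X] [AddCommGroup Y] (D : KM I X Y)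

open scoped Classical

/-- The duality pairing `⟨y, x⟩`. -/
def pr (y : Y) (x : X) : ℤ := D.pairE y x

/-- Underlying function of the simple reflection `s_i` on `X`. -/
def sXfun (i : I) (x : X) : X := x - D.pr (D.αv i) x • D.α i

lemma sX_invol (i : I) : Function.Involutive (D.sXfun i) := by
  intro x
  have h2 : D.pairE (D.αv i) (D.α i) = 2 := by rw [D.pair_av_a, D.A_diag]
  show (x - D.pairE (D.αv i) x • D.α i) -
      D.pairE (D.αv i) (x - D.pairE (D.αv i) x • D.α i) • D.α i = x
  rw [map_sub, map_zsmul, h2, smul_eq_mul]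
  have h : D.pairE (D.αv i) x - D.pairE (D.αv i) x * 2 = -(D.pairE (D.αv i) x) := by ring
  rw [h, neg_smul]
  abel

/-- The simple reflection `s_i : x ↦ x - ⟨αv i, x⟩ • α i` as an automorphism of `X`. -/
def sX (i : I) : AddAut X :=
  AddEquiv.mk' (D.sX_invol i).toPerm (by
    intro x y
    show ((x + y) - D.pairE (D.αv i) (x + y) • D.α i)
        = (x - D.pairE (D.αv i) x • D.α i) + (y - D.pairE (D.αv i) y • D.α i)
    rw [map_add, add_smul]
    abel)

/-- The vectorial Weyl group `Wᵛ`, as the subgroup of `AddAut X` generated by the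
simple reflections. -/
def Wg : Subgroup (AddAut X) := Subgroup.closure (Set.range D.sX)

/-- The contragredient action of an automorphism `f` of `X` on `Y`; it is characterized by
`⟨actY f y, x⟩ = ⟨y, f⁻¹ x⟩`. -/
def actY (f : AddAut X) (y : Y) : Y :=
  D.pairE.symm ((D.pairE y).comp (AddEquiv.toAddMonoidHom (AddEquiv.symm f)))

/-- The set of real roots `Φ = Wᵛ · {α i}`. -/
def Phi : Set X := {x | ∃ p : AddAut X × I, p.1 ∈ D.Wg ∧ x = p.1 (D.α p.2)}

/-- The set of positive real roots `Φ₊`. -/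
def PhiPos : Set X := {x | x ∈ D.Phi ∧ ∃ c : I → ℕ, x = ∑ i, (c i : ℤ) • D.α i}

/-- The set of negative real roots `Φ₋ = -Φ₊`. -/
def PhiNeg : Set X := {x | -x ∈ D.PhiPos}

/-- The coroot `β^∨` of a real root `β`: if `β = w (α i)` then `β^∨ = w (αv i)`
(this is independent of the chosen expression). -/
noncomputable def coroot (x : X) : Y :=
  if h : ∃ p : AddAut X × I, p.1 ∈ D.Wg ∧ x = p.1 (D.α p.2) then
    D.actY h.choose.1 (D.αv h.choose.2)
  else 0

/-- The reflection `s_β` associated to a real root `β`: if `β = w (α i)` then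
`s_β = w s_i w⁻¹` (independent of the chosen expression). -/
noncomputable def srefl (x : X) : AddAut X :=
  if h : ∃ p : AddAut X × I, p.1 ∈ D.Wg ∧ x = p.1 (D.α p.2) then
    h.choose.1 * D.sX h.choose.2 * h.choose.1⁻¹
  else 1

/-- The integral fundamental chamber `Y^{++}` of dominant coweights. -/
def Ypp : Set Y := {y | ∀ i, 0 ≤ D.pr y (D.α i)}

/-- The integral Tits cone `Y⁺ = Wᵛ · Y^{++}`. -/
def Yplus : Set Y := {y | ∃ p : AddAut X × Y, p.1 ∈ D.Wg ∧ p.2 ∈ D.Ypp ∧ y = D.actY p.1 p.2}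

/-- The dominant representative `λ^{++}` of `λ ∈ Y⁺` (the unique dominant element of the
orbit `Wᵛ · λ`). -/
noncomputable def dompp (y : Y) : Y :=
  if h : ∃ p : AddAut X × Y, p.1 ∈ D.Wg ∧ p.2 ∈ D.Ypp ∧ y = D.actY p.1 p.2 then
    h.choose.2
  else y

/-- The inversion set `Inv(w) = {α ∈ Φ₊ | w α ∈ Φ₋}`. -/
def invSet (w : AddAut X) : Set X := {a | a ∈ D.PhiPos ∧ w a ∈ D.PhiNeg}

/-- The Bruhat length `ℓ(w) = |Inv(w)|`. -/
noncomputable def len (w : AddAut X) : ℕ := (D.invSet w).ncard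

/-- The relative length `ℓ_v(w) = |Inv(w⁻¹)∖Inv(v⁻¹)| − |Inv(w⁻¹)∩Inv(v⁻¹)|`. -/
noncomputable def rlen (v w : AddAut X) : ℤ :=
  ((D.invSet w⁻¹ \ D.invSet v⁻¹).ncard : ℤ) - ((D.invSet w⁻¹ ∩ D.invSet v⁻¹).ncard : ℤ)

/-- `v^λ`: the minimal-length element of `Wᵛ` sending `λ^{++}` to `λ`. -/
noncomputable def vmin (l : Y) : AddAut X :=
  if h : ∃ w : AddAut X, w ∈ D.Wg ∧ D.actY w (D.dompp l) = l ∧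
      ∀ w' : AddAut X, w' ∈ D.Wg → D.actY w' (D.dompp l) = l → D.len w ≤ D.len w'
  then h.choose else 1

/-- The set of reflections of `Wᵛ`. -/
def reflections : Set (AddAut X) := {r | ∃ b ∈ D.PhiPos, r = D.srefl b}

/-- One step of the Bruhat order on `Wᵛ`. -/
def vectStep (u u' : AddAut X) : Prop :=
  ∃ r ∈ D.reflections, u' = u * r ∧ D.len u < D.len u'

/-- The Bruhat order on `Wᵛ`. -/
def vlt : AddAut X → AddAut X → Prop := Relation.TransGen D.vectStep

/-- One step of the relative Bruhat order `<_v` on `Wᵛ`. -/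
def rvStep (v u u' : AddAut X) : Prop :=
  ∃ r ∈ D.reflections, u' = u * r ∧ D.rlen v u < D.rlen v u'

/-- The relative Bruhat order `<_v` on `Wᵛ`. -/
def rvlt (v : AddAut X) : AddAut X → AddAut X → Prop := Relation.TransGen (D.rvStep v)

/-- The stabilizer `W_λ` of `λ` in `Wᵛ`. -/
def Wstab (l : Y) : Set (AddAut X) := {u | u ∈ D.Wg ∧ D.actY u l = l}

/-- `v` is the minimal-length representative of its coset `v W_λ`. -/
def IsMinRep (l : Y) (v : AddAut X) : Prop :=
  v ∈ D.Wg ∧ ∀ u ∈ D.Wstab l, D.len v ≤ D.len (v * u)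

/-- The action of `π^λ w ∈ Y ⋊ Wᵛ` on affine roots:
`π^λ w (β + nπ) = w β + (n + ⟨λ, w β⟩)π`. -/
def affAct (a : Y × AddAut X) (r : X × ℤ) : X × ℤ :=
  (a.2 r.1, r.2 + D.pr a.1 (a.2 r.1))

/-- The set `Φᵃ₊` of positive affine roots. -/
def PhiAffPos : Set (X × ℤ) :=
  {r | r.1 ∈ D.Phi ∧ (0 < r.2 ∨ (r.2 = 0 ∧ r.1 ∈ D.PhiPos))}

/-- The affine root `β[n] = sgn(n)β + |n|π`. -/
def aroot (b : X) (n : ℤ) : X × ℤ := (isgn n • b, |n|)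

/-- The affine reflection `s_{β[n]} = π^{nβ^∨} s_β`, as an element of `Y ⋊ Wᵛ`. -/
noncomputable def saff (b : X) (n : ℤ) : Y × AddAut X := (n • D.coroot b, D.srefl b)

/-- Multiplication in the semidirect product `Y ⋊ Wᵛ`:
`π^λ w · π^μ v = π^{λ + w μ} (w v)`. -/
def mulA (a b : Y × AddAut X) : Y × AddAut X := (a.1 + D.actY a.2 b.1, a.2 * b.2)

/-- One step `x < x·s_{β[n]}` of the affine Bruhat order on `W⁺`, for `β ∈ Φ₊`, `n ∈ ℤ`,
requiring both elements to lie in `W⁺` and `x(β[n]) ∈ Φᵃ₊`. -/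
def astep (a b : Y × AddAut X) : Prop :=
  a.1 ∈ D.Yplus ∧ b.1 ∈ D.Yplus ∧ a.2 ∈ D.Wg ∧ b.2 ∈ D.Wg ∧
    ∃ g ∈ D.PhiPos, ∃ m : ℤ,
      D.affAct a (aroot (X := X) g m) ∈ D.PhiAffPos ∧ b = D.mulA a (D.saff g m)

/-- The (strict) affine Bruhat order on `W⁺`. -/
def alt : (Y × AddAut X) → (Y × AddAut X) → Prop := Relation.TransGen D.astep

/-- The affine Bruhat order on `W⁺`. -/
def ale (a b : Y × AddAut X) : Prop := a = b ∨ D.alt a b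

/-- `b` covers `a` for the affine Bruhat order: `a < b` and nothing lies strictly
between them. -/
def acovers (a b : Y × AddAut X) : Prop :=
  D.alt a b ∧ ∀ c, D.alt a c → D.alt c b → False

/-- `Λ` is a family of fundamental weights: `⟨αv i, Λ j⟩ = δ_{ij}`. -/
def IsFundWeights (Λ : I → X) : Prop :=
  ∀ i j, D.pr (D.αv i) (Λ j) = if i = j then 1 else 0

/-- The height `ht(λ) = ⟨λ, ρ⟩` where `ρ = Σ_i Λ_i`. -/
def ht (Λ : I → X) (l : Y) : ℤ := D.pr l (∑ i, Λ i)

/-- The affine length `ℓᵃ` with integral values. -/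
noncomputable def alen (Λ : I → X) (a : Y × AddAut X) : ℤ :=
  2 * D.ht Λ (D.dompp a.1) +
    ((({x | x ∈ D.invSet a.2⁻¹ ∧ 0 ≤ D.pr a.1 x}).ncard : ℤ) -
      (({x | x ∈ D.invSet a.2⁻¹ ∧ D.pr a.1 x < 0}).ncard : ℤ))

end KM


namespace KM

variable {I X Y : Type*} [Fintype I] [AddCommGroup X] [AddCommGroup Y] (D : KM I X Y)

open scoped Classical

/-! ### Basic lemmas -/

lemma sX_apply (i : I) (x : X) : D.sX i x = x - D.pr (D.αv i) x • D.α i := rfl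

lemma pr_alpha (i j : I) : D.pr (D.αv i) (D.α j) = D.A i j := D.pair_av_a i j

lemma sX_inv (i : I) : (D.sX i)⁻¹ = D.sX i := by
  ext x
  have h := D.sX_invol i x
  show (D.sX i).symm x = D.sX i x
  apply (D.sX i).injective
  rw [AddEquiv.apply_symm_apply]
  exact (h).symm

lemma sX_sX (i : I) (x : X) : D.sX i (D.sX i x) = x := D.sX_invol i x

lemma sX_mem (i : I) : D.sX i ∈ D.Wg :=
  Subgroup.subset_closure ⟨i, rfl⟩

lemma sX_mul_self (i : I) : D.sX i * D.sX i = 1 := by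
  nth_rewrite 1 [← D.sX_inv i]
  exact inv_mul_cancel _

lemma word_inv (l : List I) :
    ((l.map D.sX).prod)⁻¹ = (l.reverse.map D.sX).prod := by
  induction l with
  | nil => simp
  | cons a t ih =>
    simp only [List.reverse_cons, List.map_append, List.prod_append, List.map_cons,
      List.prod_cons, List.map_nil, List.prod_nil, mul_one, mul_inv_rev, ih, D.sX_inv a]

lemma sX_alpha_self (i : I) : D.sX i (D.α i) = - D.α i := by
  rw [sX_apply, pr_alpha, D.A_diag]
  show D.α i - (2:ℤ) • D.α i = -D.α i
  rw [two_smul]; abel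

lemma pr_actY (f : AddAut X) (y : Y) (x : X) : D.pr (D.actY f y) x = D.pr y (f⁻¹ x) := by
  simp only [pr, actY, AddEquiv.apply_symm_apply, AddMonoidHom.comp_apply]
  rfl

lemma actY_one (y : Y) : D.actY 1 y = y := by
  apply D.pairE.injective
  ext x
  have := D.pr_actY 1 y x
  exact this

lemma actY_mul (f g : AddAut X) (y : Y) : D.actY (f * g) y = D.actY f (D.actY g y) := by
  apply D.pairE.injective
  ext x
  have h1 := D.pr_actY (f * g) y x
  have h2 := D.pr_actY f (D.actY g y) x
  have h3 := D.pr_actY g y (f⁻¹ x)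
  simp only [pr] at h1 h2 h3
  rw [h1, h2, h3, mul_inv_rev]
  rfl

/-- Each element of `Wg` is a product of simple reflections. -/
lemma mem_Wg_iff_word (u : AddAut X) :
    u ∈ D.Wg ↔ ∃ l : List I, (l.map D.sX).prod = u := by
  constructor
  · intro hu
    induction hu using Subgroup.closure_induction with
    | mem x hx =>
      obtain ⟨i, rfl⟩ := hx
      exact ⟨[i], by simp⟩
    | one => exact ⟨[], by simp⟩
    | mul x y _ _ hx hy =>
      obtain ⟨l1, h1⟩ := hx; obtain ⟨l2, h2⟩ := hy
      exact ⟨l1 ++ l2, by rw [List.map_append, List.prod_append, h1, h2]⟩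
    | inv x _ hx =>
      obtain ⟨l, h⟩ := hx
      exact ⟨l.reverse, by rw [← D.word_inv, h]⟩
  · rintro ⟨l, rfl⟩
    induction l with
    | nil => simp
    | cons a t ih =>
      simp only [List.map_cons, List.prod_cons]
      exact Subgroup.mul_mem _ (D.sX_mem a) ih

/-! ### Coefficients and positivity -/

/-- `x` is a nonnegative integer combination of simple roots. -/
def IsNN (x : X) : Prop := ∃ c : I → ℕ, x = ∑ i, (c i : ℤ) • D.α i

lemma coeff_unique {c d : I → ℤ} (h : ∑ i, c i • D.α i = ∑ i, d i • D.α i) : c = d := by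
  have h0 : ∑ i, (c i - d i) • D.α i = 0 := by
    simp only [sub_smul, Finset.sum_sub_distrib, h, sub_self]
  funext i
  have := (Fintype.linearIndependent_iff.mp D.indep_α) (fun i => c i - d i) h0 i
  linarith [this]

lemma alpha_ne_zero (i : I) : D.α i ≠ 0 := D.indep_α.ne_zero i

lemma zero_not_mem_Phi : (0 : X) ∉ D.Phi := by
  rintro ⟨⟨u, k⟩, hu, h⟩
  have : D.α k = 0 := by
    have := congrArg u.symm h
    simpa using this.symm
  exact D.alpha_ne_zero k this

lemma PhiPos_nonneg_ne (x : X) (hx : x ∈ D.PhiPos) :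
    ∃ c : I → ℕ, x = ∑ i, (c i : ℤ) • D.α i ∧ c ≠ 0 := by
  obtain ⟨hΦ, c, hc⟩ := hx
  refine ⟨c, hc, ?_⟩
  rintro rfl
  apply D.zero_not_mem_Phi
  simpa [hc] using hΦ

lemma sum_three_pos_ne_zero {p q s : X} (hp : p ∈ D.PhiPos) (hq : q ∈ D.PhiPos)
    (hs : s ∈ D.PhiPos) (c : ℤ) (hc : 0 ≤ c) : p + q + c • s ≠ 0 := by
  obtain ⟨a, ha, hane⟩ := D.PhiPos_nonneg_ne p hp
  obtain ⟨b, hb, -⟩ := D.PhiPos_nonneg_ne q hq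
  obtain ⟨e, he, -⟩ := D.PhiPos_nonneg_ne s hs
  intro h0
  have hsum : ∑ i, ((a i : ℤ) + (b i : ℤ) + c * (e i : ℤ)) • D.α i = ∑ i, (0:ℤ) • D.α i := by
    simp only [add_smul, Finset.sum_add_distrib, zero_smul, Finset.sum_const_zero]
    rw [← ha, ← hb]
    have : ∑ i, (c * (e i : ℤ)) • D.α i = c • s := by
      rw [he, Finset.smul_sum]
      congr 1; funext i; rw [smul_smul]
    rw [this]; exact h0
  have := D.coeff_unique hsum
  apply hane
  funext i
  have hi := congrFun this i
  have h1 : (0:ℤ) ≤ (a i : ℤ) := Int.natCast_nonneg _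
  have h2 : (0:ℤ) ≤ (b i : ℤ) := Int.natCast_nonneg _
  have h3 : (0:ℤ) ≤ c * (e i : ℤ) := mul_nonneg hc (Int.natCast_nonneg _)
  have : (a i : ℤ) = 0 := by linarith [hi]
  exact_mod_cast this

lemma PhiPos_neg_not (x : X) (hx : x ∈ D.PhiPos) : -x ∉ D.PhiPos := by
  intro hnx
  obtain ⟨a, ha, hane⟩ := D.PhiPos_nonneg_ne x hx
  obtain ⟨b, hb, -⟩ := D.PhiPos_nonneg_ne (-x) hnx
  have hsum : ∑ i, ((a i : ℤ) + (b i : ℤ)) • D.α i = ∑ i, (0:ℤ) • D.α i := by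
    simp only [add_smul, Finset.sum_add_distrib, zero_smul, Finset.sum_const_zero, ← ha, ← hb]
    abel
  have := D.coeff_unique hsum
  apply hane; funext i
  have hi := congrFun this i
  have h1 : (0:ℤ) ≤ (a i : ℤ) := Int.natCast_nonneg _
  have h2 : (0:ℤ) ≤ (b i : ℤ) := Int.natCast_nonneg _
  have : (a i : ℤ) = 0 := by linarith [hi]
  exact_mod_cast this

lemma pos_neg_disjoint : D.PhiPos ∩ D.PhiNeg = ∅ := by
  ext x
  simp only [Set.mem_inter_iff, Set.mem_empty_iff_false, iff_false, not_and]
  intro hp hn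
  exact D.PhiPos_neg_not x hp hn

lemma Phi_stable {u : AddAut X} (hu : u ∈ D.Wg) {x : X} (hx : x ∈ D.Phi) :
    u x ∈ D.Phi := by
  obtain ⟨⟨g, k⟩, hg, rfl⟩ := hx
  exact ⟨⟨u * g, k⟩, Subgroup.mul_mem _ hu hg, rfl⟩

lemma alpha_mem_Phi (i : I) : D.α i ∈ D.Phi := ⟨⟨1, i⟩, Subgroup.one_mem _, rfl⟩

lemma alpha_mem_PhiPos (i : I) : D.α i ∈ D.PhiPos := by
  refine ⟨D.alpha_mem_Phi i, fun j => if j = i then 1 else 0, ?_⟩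
  rw [Finset.sum_eq_single i] <;> simp +contextual

end KM
namespace KM

variable {I X Y : Type*} [Fintype I] [AddCommGroup X] [AddCommGroup Y] (D : KM I X Y)

open scoped Classical

lemma mul_apply' (f g : AddAut X) (x : X) : (f * g) x = f (g x) := rfl

lemma one_apply' (x : X) : (1 : AddAut X) x = x := rfl

lemma pr_sub (y : Y) (x z : X) : D.pr y (x - z) = D.pr y x - D.pr y z := by
  simp [pr, map_sub]

lemma pr_add (y : Y) (x z : X) : D.pr y (x + z) = D.pr y x + D.pr y z := by
  simp [pr, map_add]

lemma pr_zsmul (y : Y) (c : ℤ) (x : X) : D.pr y (c • x) = c * D.pr y x := by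
  simp [pr, map_zsmul, smul_eq_mul]

lemma pr_neg (y : Y) (x : X) : D.pr y (-x) = - D.pr y x := by
  simp [pr, map_neg]

/-- index of the n-th letter of the alternating word starting with `i`. -/
def tidx (i j : I) (n : ℕ) : I := if n % 2 = 0 then i else j

lemma tidx_succ (i j : I) (n : ℕ) : tidx i j (n+1) = tidx j i n := by
  unfold tidx
  rcases Nat.mod_two_eq_zero_or_one n with h | h <;> simp [Nat.add_mod, h]

lemma tidx_pair (i j : I) (n : ℕ) :
    (tidx i j n = i ∧ tidx j i n = j) ∨ (tidx i j n = j ∧ tidx j i n = i) := by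
  unfold tidx
  rcases Nat.mod_two_eq_zero_or_one n with h | h <;> simp [h]

lemma tidx_even (i j : I) {n : ℕ} (h : n % 2 = 0) : tidx i j n = i := by simp [tidx, h]

lemma tidx_odd (i j : I) {n : ℕ} (h : n % 2 = 1) : tidx i j n = j := by simp [tidx, h]

/-- the alternating word `s_i s_j s_i ⋯` of length `n` (letters multiplied left to right). -/
def uu (i j : I) (n : ℕ) : AddAut X := (((List.range n).map (tidx i j)).map D.sX).prod

lemma uu_zero (i j : I) : D.uu i j 0 = 1 := by simp [uu]

lemma uu_succ (i j : I) (n : ℕ) : D.uu i j (n+1) = D.uu i j n * D.sX (tidx i j n) := by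
  simp [uu, List.range_succ]

lemma uu_one (i j : I) : D.uu i j 1 = D.sX i := by
  rw [uu_succ, uu_zero, one_mul, tidx_even i j (by norm_num)]

lemma uu_left (i j : I) (n : ℕ) : D.uu i j (n+1) = D.sX i * D.uu j i n := by
  induction n with
  | zero => rw [uu_one, uu_zero, mul_one]
  | succ n ih => rw [uu_succ, ih, tidx_succ, mul_assoc, ← uu_succ]

lemma uu_mem (i j : I) (n : ℕ) : D.uu i j n ∈ D.Wg := by
  induction n with
  | zero => rw [uu_zero]; exact Subgroup.one_mem _
  | succ n ih => rw [uu_succ]; exact Subgroup.mul_mem _ ih (D.sX_mem _)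

lemma uu_succ_cancel (i j : I) (n : ℕ) : D.uu i j (n+1) * D.sX (tidx i j n) = D.uu i j n := by
  rw [uu_succ, mul_assoc, sX_mul_self, mul_one]

/-- The "dihedral" subset generated by `s_i, s_j`. -/
def Wpair (i j : I) : Set (AddAut X) := {g | ∃ n, g = D.uu i j n ∨ g = D.uu j i n}

/-- Length in the dihedral subgroup. -/
noncomputable def l2 (i j : I) (g : AddAut X) : ℕ :=
  sInf {n | g = D.uu i j n ∨ g = D.uu j i n}

lemma l2_le {i j : I} {g : AddAut X} {n : ℕ} (h : g = D.uu i j n ∨ g = D.uu j i n) :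
    D.l2 i j g ≤ n := Nat.sInf_le h

lemma l2_spec {i j : I} {g : AddAut X} (hg : g ∈ D.Wpair i j) :
    g = D.uu i j (D.l2 i j g) ∨ g = D.uu j i (D.l2 i j g) := Nat.sInf_mem hg

lemma l2_comm (i j : I) (g : AddAut X) : D.l2 i j g = D.l2 j i g := by
  unfold l2; congr 1; ext n; exact or_comm

lemma one_mem_Wpair (i j : I) : (1 : AddAut X) ∈ D.Wpair i j :=
  ⟨0, Or.inl (D.uu_zero i j).symm⟩

lemma Wpair_symm {i j : I} {g : AddAut X} (hg : g ∈ D.Wpair i j) : g ∈ D.Wpair j i := by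
  obtain ⟨n, h⟩ := hg; exact ⟨n, h.symm⟩

lemma Wpair_sub_Wg {i j : I} {g : AddAut X} (hg : g ∈ D.Wpair i j) : g ∈ D.Wg := by
  obtain ⟨n, h | h⟩ := hg <;> (subst h; exact D.uu_mem _ _ _)

lemma uu_mul_sX {i j : I} (n : ℕ) {k : I} (hk : k = i ∨ k = j) :
    ∃ m ≤ n + 1, (D.uu i j n * D.sX k = D.uu i j m ∨ D.uu i j n * D.sX k = D.uu j i m) := by
  by_cases hk' : k = tidx i j n
  · exact ⟨n+1, le_refl _, Or.inl (by rw [hk', ← uu_succ])⟩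
  · have hkt : k = tidx j i n := by
      rcases tidx_pair i j n with ⟨h1, h2⟩ | ⟨h1, h2⟩ <;> rcases hk with rfl | rfl <;>
        simp_all
    cases n with
    | zero =>
      have : tidx j i 0 = j := tidx_even j i (by norm_num)
      refine ⟨1, by norm_num, Or.inr ?_⟩
      rw [uu_zero, one_mul, uu_one, hkt, this]
    | succ n' =>
      refine ⟨n', by omega, Or.inl ?_⟩
      rw [hkt, tidx_succ, uu_succ_cancel]

lemma sX_mul_uu {i j : I} (n : ℕ) {k : I} (hk : k = i ∨ k = j) :
    ∃ m ≤ n + 1, (D.sX k * D.uu i j n = D.uu i j m ∨ D.sX k * D.uu i j n = D.uu j i m) := by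
  rcases hk with rfl | rfl
  · cases n with
    | zero => exact ⟨1, by norm_num, Or.inl (by rw [uu_zero, mul_one, uu_one])⟩
    | succ n' =>
      refine ⟨n', by omega, Or.inr ?_⟩
      rw [uu_left, ← mul_assoc, sX_mul_self, one_mul]
  · exact ⟨n+1, le_refl _, Or.inr (by rw [← uu_left])⟩

lemma mul_sX_mem_Wpair {i j : I} {g : AddAut X} (hg : g ∈ D.Wpair i j) {k : I}
    (hk : k = i ∨ k = j) : g * D.sX k ∈ D.Wpair i j := by
  obtain ⟨n, h | h⟩ := hg
  · subst h; obtain ⟨m, _, h⟩ := D.uu_mul_sX n hk; exact ⟨m, h⟩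
  · subst h
    obtain ⟨m, _, h⟩ := D.uu_mul_sX (i := j) (j := i) n (hk.symm)
    exact ⟨m, h.symm⟩

lemma sX_mul_mem_Wpair {i j : I} {g : AddAut X} (hg : g ∈ D.Wpair i j) {k : I}
    (hk : k = i ∨ k = j) : D.sX k * g ∈ D.Wpair i j := by
  obtain ⟨n, h | h⟩ := hg
  · subst h; obtain ⟨m, _, h⟩ := D.sX_mul_uu n hk; exact ⟨m, h⟩
  · subst h
    obtain ⟨m, _, h⟩ := D.sX_mul_uu (i := j) (j := i) n (hk.symm)
    exact ⟨m, h.symm⟩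

lemma l2_mul_sX_le {i j : I} {g : AddAut X} (hg : g ∈ D.Wpair i j) {k : I}
    (hk : k = i ∨ k = j) : D.l2 i j (g * D.sX k) ≤ D.l2 i j g + 1 := by
  rcases D.l2_spec hg with h | h
  · obtain ⟨m, hm, h2⟩ := D.uu_mul_sX (D.l2 i j g) hk
    rw [← h] at h2
    exact le_trans (D.l2_le h2) hm
  · obtain ⟨m, hm, h2⟩ := D.uu_mul_sX (i := j) (j := i) (D.l2 i j g) hk.symm
    rw [← h] at h2
    exact le_trans (D.l2_le h2.symm) hm

lemma l2_le_mul_sX {i j : I} {g : AddAut X} (hg : g ∈ D.Wpair i j) {k : I}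
    (hk : k = i ∨ k = j) : D.l2 i j g ≤ D.l2 i j (g * D.sX k) + 1 := by
  have h1 : g * D.sX k ∈ D.Wpair i j := D.mul_sX_mem_Wpair hg hk
  have h2 : (g * D.sX k) * D.sX k = g := by rw [mul_assoc, sX_mul_self, mul_one]
  have := D.l2_mul_sX_le h1 hk
  rw [h2] at this
  exact this

lemma l2_sX_mul_le {i j : I} {g : AddAut X} (hg : g ∈ D.Wpair i j) {k : I}
    (hk : k = i ∨ k = j) : D.l2 i j (D.sX k * g) ≤ D.l2 i j g + 1 := by
  rcases D.l2_spec hg with h | h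
  · obtain ⟨m, hm, h2⟩ := D.sX_mul_uu (D.l2 i j g) hk
    rw [← h] at h2
    exact le_trans (D.l2_le h2) hm
  · obtain ⟨m, hm, h2⟩ := D.sX_mul_uu (i := j) (j := i) (D.l2 i j g) hk.symm
    rw [← h] at h2
    exact le_trans (D.l2_le h2.symm) hm

lemma l2_le_sX_mul {i j : I} {g : AddAut X} (hg : g ∈ D.Wpair i j) {k : I}
    (hk : k = i ∨ k = j) : D.l2 i j g ≤ D.l2 i j (D.sX k * g) + 1 := by
  have h1 : D.sX k * g ∈ D.Wpair i j := D.sX_mul_mem_Wpair hg hk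
  have h2 : D.sX k * (D.sX k * g) = g := by rw [← mul_assoc, sX_mul_self, one_mul]
  have := D.l2_sX_mul_le h1 hk
  rw [h2] at this
  exact this

/-! ### global word length -/

noncomputable def wlen (u : AddAut X) : ℕ :=
  sInf {n | ∃ l : List I, l.length = n ∧ (l.map D.sX).prod = u}

lemma wlen_le {u : AddAut X} {l : List I} (h : (l.map D.sX).prod = u) :
    D.wlen u ≤ l.length := Nat.sInf_le ⟨l, rfl, h⟩

lemma wlen_spec {u : AddAut X} (hu : u ∈ D.Wg) :
    ∃ l : List I, l.length = D.wlen u ∧ (l.map D.sX).prod = u := by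
  obtain ⟨l, hl⟩ := (D.mem_Wg_iff_word u).mp hu
  have hne : {n | ∃ l : List I, l.length = n ∧ (l.map D.sX).prod = u}.Nonempty :=
    ⟨l.length, ⟨l, rfl, hl⟩⟩
  exact Nat.sInf_mem hne

lemma wlen_one : D.wlen 1 = 0 :=
  Nat.le_zero.mp (D.wlen_le (l := []) (by simp))

lemma eq_one_of_wlen_eq_zero {u : AddAut X} (hu : u ∈ D.Wg) (h : D.wlen u = 0) : u = 1 := by
  obtain ⟨l, hl, hp⟩ := D.wlen_spec hu
  rw [h] at hl
  rw [List.length_eq_zero_iff] at hl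
  subst hl
  simpa using hp.symm

lemma wlen_mul_le {u v : AddAut X} (hu : u ∈ D.Wg) (hv : v ∈ D.Wg) :
    D.wlen (u * v) ≤ D.wlen u + D.wlen v := by
  obtain ⟨l1, hl1, hp1⟩ := D.wlen_spec hu
  obtain ⟨l2, hl2, hp2⟩ := D.wlen_spec hv
  have : ((l1 ++ l2).map D.sX).prod = u * v := by
    rw [List.map_append, List.prod_append, hp1, hp2]
  have := D.wlen_le this
  simpa [hl1, hl2] using this

lemma wlen_uu_le (i j : I) (n : ℕ) : D.wlen (D.uu i j n) ≤ n := by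
  have : ((((List.range n).map (tidx i j))).map D.sX).prod = D.uu i j n := rfl
  have h := D.wlen_le this
  simpa using h

lemma wlen_sX_le (k : I) : D.wlen (D.sX k) ≤ 1 := by
  have : (([k]).map D.sX).prod = D.sX k := by simp
  simpa using D.wlen_le this

lemma wlen_mul_sX_ge {u : AddAut X} (hu : u ∈ D.Wg) (k : I) :
    D.wlen u ≤ D.wlen (u * D.sX k) + 1 := by
  have h2 : (u * D.sX k) * D.sX k = u := by rw [mul_assoc, sX_mul_self, mul_one]
  have hm : u * D.sX k ∈ D.Wg := Subgroup.mul_mem _ hu (D.sX_mem k)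
  calc D.wlen u = D.wlen ((u * D.sX k) * D.sX k) := by rw [h2]
  _ ≤ D.wlen (u * D.sX k) + D.wlen (D.sX k) := D.wlen_mul_le hm (D.sX_mem k)
  _ ≤ D.wlen (u * D.sX k) + 1 := by have := D.wlen_sX_le k; omega

end KM
namespace KM

variable {I X Y : Type*} [Fintype I] [AddCommGroup X] [AddCommGroup Y] (D : KM I X Y)

open scoped Classical

/-! ### Braid relations in rank 2 -/

lemma braid00 (i j : I) (h1 : D.A i j = 0) (h2 : D.A j i = 0) :
    D.uu i j 2 = D.uu j i 2 := by
  ext x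
  simp only [uu_succ, uu_zero, tidx]
  norm_num
  simp only [one_mul, mul_apply', sX_apply]
  simp only [pr_sub, pr_zsmul, pr_alpha, D.A_diag, h1, h2]
  module

lemma braid11 (i j : I) (h1 : D.A i j = -1) (h2 : D.A j i = -1) :
    D.uu i j 3 = D.uu j i 3 := by
  ext x
  simp only [uu_succ, uu_zero, tidx]
  norm_num
  simp only [one_mul, mul_apply', sX_apply]
  simp only [pr_sub, pr_zsmul, pr_alpha, D.A_diag, h1, h2]
  module

lemma braid12 (i j : I) (h1 : D.A i j = -1) (h2 : D.A j i = -2) :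
    D.uu i j 4 = D.uu j i 4 := by
  ext x
  simp only [uu_succ, uu_zero, tidx]
  norm_num
  simp only [one_mul, mul_apply', sX_apply]
  simp only [pr_sub, pr_zsmul, pr_alpha, D.A_diag, h1, h2]
  module

lemma braid13 (i j : I) (h1 : D.A i j = -1) (h2 : D.A j i = -3) :
    D.uu i j 6 = D.uu j i 6 := by
  ext x
  simp only [uu_succ, uu_zero, tidx]
  norm_num
  simp only [one_mul, mul_apply', sX_apply]
  simp only [pr_sub, pr_zsmul, pr_alpha, D.A_diag, h1, h2]
  module

lemma braid_shift {i j : I} {m : ℕ} (hbr : D.uu i j m = D.uu j i m) :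
    ∀ t, t ≤ m → D.uu i j (m+t) = D.uu j i (m-t) ∧ D.uu j i (m+t) = D.uu i j (m-t) := by
  intro t
  induction t with
  | zero => intro _; simpa using ⟨hbr, hbr.symm⟩
  | succ t ih =>
    intro ht
    obtain ⟨ih1, ih2⟩ := ih (by omega)
    have hmt : m - t = (m - (t+1)) + 1 := by omega
    constructor
    · have : D.uu i j (m + t + 1) = D.sX i * D.uu j i (m + t) := D.uu_left i j (m+t)
      rw [show m + (t+1) = m + t + 1 by omega, this, ih2, hmt, uu_left, ← mul_assoc,
        sX_mul_self, one_mul]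
    · have : D.uu j i (m + t + 1) = D.sX j * D.uu i j (m + t) := D.uu_left j i (m+t)
      rw [show m + (t+1) = m + t + 1 by omega, this, ih1, hmt, uu_left, ← mul_assoc,
        sX_mul_self, one_mul]

lemma uu_two_m {i j : I} {m : ℕ} (hbr : D.uu i j m = D.uu j i m) :
    D.uu i j (2*m) = 1 := by
  have := (D.braid_shift hbr m (le_refl m)).1
  rw [show m + m = 2*m by omega] at this
  simpa [uu_zero] using this

lemma uu_period {i j : I} {m : ℕ} (hbr : D.uu i j m = D.uu j i m) (r : ℕ) :
    D.uu i j (2*m + r) = D.uu i j r := by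
  induction r with
  | zero => simpa [uu_zero] using D.uu_two_m hbr
  | succ r ih =>
    have hpar : (2*m + r) % 2 = r % 2 := by omega
    rw [show 2*m + (r+1) = (2*m + r) + 1 by omega, uu_succ, ih, uu_succ]
    congr 1
    unfold tidx
    rw [hpar]

lemma l2_lt_of_big {i j : I} {m : ℕ} (hm : 1 ≤ m) (hbr : D.uu i j m = D.uu j i m)
    {n : ℕ} (hn : m + 1 ≤ n) : D.l2 i j (D.uu i j n) < n := by
  rcases le_or_gt n (2*m) with h | h
  · have ht : n - m ≤ m := by omega
    have := (D.braid_shift hbr (n - m) ht).1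
    rw [show m + (n - m) = n by omega] at this
    have hle := D.l2_le (Or.inr this)
    omega
  · have : D.uu i j n = D.uu i j (n - 2*m) := by
      have := D.uu_period hbr (n - 2*m)
      rw [show 2*m + (n - 2*m) = n by omega] at this
      exact this
    have hle := D.l2_le (Or.inl this)
    omega

/-! ### coefficients of `uu i j n (α i)` -/

/-- coefficient pairs: `(pq a b n).1` is the coefficients of `uu i j n (α i)`
in `(α i, α j)`, and `(pq a b n).2` those of `uu j i n (α i)`,
where `a = -A i j`, `b = -A j i`. -/
def pq (a b : ℤ) : ℕ → (ℤ × ℤ) × (ℤ × ℤ)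
  | 0 => ((1, 0), (1, 0))
  | n+1 =>
    let w := pq a b n
    ((a * w.2.2 - w.2.1, w.2.2), (w.1.1, b * w.1.1 - w.1.2))

lemma uu_apply_alpha (i j : I) (n : ℕ) :
    D.uu i j n (D.α i)
        = (pq (-(D.A i j)) (-(D.A j i)) n).1.1 • D.α i
          + (pq (-(D.A i j)) (-(D.A j i)) n).1.2 • D.α j ∧
    D.uu j i n (D.α i)
        = (pq (-(D.A i j)) (-(D.A j i)) n).2.1 • D.α i
          + (pq (-(D.A i j)) (-(D.A j i)) n).2.2 • D.α j := by
  induction n with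
  | zero =>
    rw [uu_zero]
    constructor <;> · show D.α i = _; simp [pq]
  | succ n ih =>
    obtain ⟨ih1, ih2⟩ := ih
    constructor
    · rw [uu_left, mul_apply', ih2, sX_apply]
      simp only [pr_add, pr_zsmul, pr_alpha, D.A_diag, pq]
      module
    · rw [uu_left, mul_apply', ih1, sX_apply]
      simp only [pr_add, pr_zsmul, pr_alpha, D.A_diag, pq]
      module

lemma pq_nonneg {a b : ℤ} (ha : 1 ≤ a) (hb : 1 ≤ b) (hab : 4 ≤ a * b) : ∀ n : ℕ,
    (n % 2 = 1 → 0 ≤ (pq a b n).2.1 ∧ 0 ≤ (pq a b n).2.2 ∧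
      b * (pq a b n).2.1 ≤ 2 * (pq a b n).2.2)
    ∧ (n % 2 = 0 ∧ 1 ≤ n → 0 ≤ (pq a b n).1.1 ∧ 0 ≤ (pq a b n).1.2 ∧
      a * (pq a b n).1.2 ≤ 2 * (pq a b n).1.1) := by
  intro n
  induction n with
  | zero => exact ⟨by omega, by omega⟩
  | succ n ih =>
    obtain ⟨ih1, ih2⟩ := ih
    rcases Nat.mod_two_eq_zero_or_one n with hpar | hpar
    · refine ⟨fun _ => ?_, by omega⟩
      rcases Nat.eq_zero_or_pos n with rfl | hn
      · simp only [pq]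
        refine ⟨by norm_num, by nlinarith, by nlinarith⟩
      · obtain ⟨h1, h2, h3⟩ := ih2 ⟨hpar, hn⟩
        simp only [pq]
        refine ⟨h1, by nlinarith, by nlinarith⟩
    · refine ⟨by omega, fun _ => ?_⟩
      obtain ⟨h1, h2, h3⟩ := ih1 hpar
      simp only [pq]
      refine ⟨by nlinarith, h2, by nlinarith⟩

/-! ### bound on `l2` under a braid relation -/

lemma l2_bound_of_braid {i j : I} {g : AddAut X} (hg : g ∈ D.Wpair i j)
    (hlen : D.l2 i j g ≤ D.l2 i j (g * D.sX i)) {m : ℕ} (hm : 1 ≤ m)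
    (hbr : D.uu i j m = D.uu j i m) : D.l2 i j g + 1 ≤ m := by
  set n := D.l2 i j g with hn
  have rep := D.l2_spec hg
  rw [← hn] at rep
  have hnm : n ≤ m := by
    by_contra hcon
    push_neg at hcon
    rcases rep with h | h
    · have := D.l2_lt_of_big hm hbr (n := n) (by omega)
      rw [← h] at this; omega
    · have := D.l2_lt_of_big hm hbr.symm (n := n) (by omega)
      rw [← h] at this
      have := D.l2_comm i j g
      omega
  rcases Nat.lt_or_ge n m with h | h
  · omega
  · -- n = m : contradiction
    exfalso
    have hnm' : n = m := by omega
    have hgi : g = D.uu i j m := by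
      rcases rep with h' | h'
      · rw [h', hnm']
      · rw [h', hnm', ← hbr]
    have hgj : g = D.uu j i m := by rw [hgi, hbr]
    obtain ⟨m', rfl⟩ : ∃ m', m = m' + 1 := ⟨m - 1, by omega⟩
    rcases tidx_pair i j m' with ⟨h1, h2⟩ | ⟨h1, h2⟩
    · -- tidx i j m' = i : cancel in the i j form
      have : g * D.sX i = D.uu i j m' := by
        have hc := D.uu_succ_cancel i j m'
        rw [h1] at hc
        rw [hgi, hc]
      have := D.l2_le (Or.inl this)
      omega
    · -- tidx j i m' = i : cancel in the j i form
      have : g * D.sX i = D.uu j i m' := by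
        have hc := D.uu_succ_cancel j i m'
        rw [h2] at hc
        rw [hgj, hc]
      have := D.l2_le (Or.inr this)
      omega

end KM
namespace KM

variable {I X Y : Type*} [Fintype I] [AddCommGroup X] [AddCommGroup Y] (D : KM I X Y)

open scoped Classical

lemma pq_c1a (a b : ℤ) : (pq a b 1).2.1 = 1 := by simp [pq]
lemma pq_c1b (a b : ℤ) : (pq a b 1).2.2 = b := by simp [pq]
lemma pq_c2a (a b : ℤ) : (pq a b 2).1.1 = a*b - 1 := by simp [pq]; try ring
lemma pq_c2b (a b : ℤ) : (pq a b 2).1.2 = b := by simp [pq]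
lemma pq_c3a (a b : ℤ) : (pq a b 3).2.1 = a*b - 1 := by simp [pq]; try ring
lemma pq_c3b (a b : ℤ) : (pq a b 3).2.2 = b*(a*b) - 2*b := by simp [pq]; try ring
lemma pq_c4a (a b : ℤ) : (pq a b 4).1.1 = (a*b)*(a*b) - 3*(a*b) + 1 := by simp [pq]; try ring
lemma pq_c4b (a b : ℤ) : (pq a b 4).1.2 = b*(a*b) - 2*b := by simp [pq]; try ring
lemma pq_c5a (a b : ℤ) : (pq a b 5).2.1 = (a*b)*(a*b) - 3*(a*b) + 1 := by simp [pq]; try ring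
lemma pq_c5b (a b : ℤ) : (pq a b 5).2.2 = b*((a*b)*(a*b)) - 4*(b*(a*b)) + 3*b := by
  simp [pq]; try ring

lemma pq_cases {a b : ℤ} (hb : 0 ≤ b) {n m : ℕ} (hn1 : 1 ≤ n) (hnm : n + 1 ≤ m)
    (hmok : (m = 2 ∧ a*b = 0) ∨ (m = 3 ∧ a*b = 1) ∨ (m = 4 ∧ a*b = 2) ∨ (m = 6 ∧ a*b = 3)) :
    (n % 2 = 0 → 0 ≤ (pq a b n).1.1 ∧ 0 ≤ (pq a b n).1.2) ∧
    (n % 2 = 1 → 0 ≤ (pq a b n).2.1 ∧ 0 ≤ (pq a b n).2.2) := by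
  have hbm : ∀ c : ℤ, 0 ≤ c → 0 ≤ b * c := fun c hc => mul_nonneg hb hc
  rcases hmok with ⟨rfl, hab⟩ | ⟨rfl, hab⟩ | ⟨rfl, hab⟩ | ⟨rfl, hab⟩ <;>
    [skip; skip; skip; skip] <;>
  · have hn5 : n ≤ 5 := by omega
    interval_cases n <;>
      refine ⟨fun hpar => ?_, fun hpar => ?_⟩ <;>
      first
        | omega
        | (constructor <;>
            simp only [pq_c1a, pq_c1b, pq_c2a, pq_c2b, pq_c3a, pq_c3b, pq_c4a, pq_c4b,
              pq_c5a, pq_c5b, hab] <;>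
            nlinarith [hb])

lemma sX_ne_one (k : I) : D.sX k ≠ 1 := by
  intro h
  have h2 : D.sX k (D.α k) = D.α k := by rw [h]; rfl
  rw [D.sX_alpha_self k] at h2
  have h3 : (2:ℤ) • D.α k = 0 := by
    have : D.α k + D.α k = 0 := by
      nth_rewrite 1 [← h2]; abel
    rw [two_smul]; exact this
  have h4 := (Fintype.linearIndependent_iff.mp D.indep_α)
      (fun t => if t = k then 2 else 0) ?_ k
  · simp at h4
  · rw [Finset.sum_eq_single k] <;> simp +contextual
    exact h3

lemma IsNN_comb {x y : X} (hx : D.IsNN x) (hy : D.IsNN y) {c d : ℤ}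
    (hc : 0 ≤ c) (hd : 0 ≤ d) : D.IsNN (c • x + d • y) := by
  obtain ⟨e, he⟩ := hx
  obtain ⟨f, hf⟩ := hy
  refine ⟨fun k => c.toNat * e k + d.toNat * f k, ?_⟩
  rw [he, hf, Finset.smul_sum, Finset.smul_sum, ← Finset.sum_add_distrib]
  congr 1
  funext k
  rw [smul_smul, smul_smul, ← add_smul]
  congr 1
  push_cast
  rw [Int.toNat_of_nonneg hc, Int.toNat_of_nonneg hd]

/-- The rank-2 positivity lemma. -/
lemma rank2 {i j : I} (hij : i ≠ j) {g : AddAut X} (hg : g ∈ D.Wpair i j)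
    (hlen : D.l2 i j g ≤ D.l2 i j (g * D.sX i)) :
    ∃ c d : ℤ, 0 ≤ c ∧ 0 ≤ d ∧ g (D.α i) = c • D.α i + d • D.α j := by
  have ha : 0 ≤ -(D.A i j) := by have := D.A_offdiag i j hij; omega
  have hb : 0 ≤ -(D.A j i) := by have := D.A_offdiag j i hij.symm; omega
  set n := D.l2 i j g with hn
  have rep := D.l2_spec hg
  rw [← hn] at rep
  have hlen2 : D.l2 i j g ≤ D.l2 i j (g * D.sX i) := by rw [← hn]; exact hlen
  clear_value n
  rcases Nat.eq_zero_or_pos n with hn0 | hn1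
  · have hg1 : g = 1 := by
      rcases rep with h | h <;> (rw [h, hn0, uu_zero])
    refine ⟨1, 0, by norm_num, by norm_num, ?_⟩
    rw [hg1, one_apply']
    simp
  · -- the last letter of a reduced expression for g is s_j
    have hend : (g = D.uu i j n ∧ n % 2 = 0) ∨ (g = D.uu j i n ∧ n % 2 = 1) := by
      obtain ⟨n', rfl⟩ : ∃ n', n = n' + 1 := ⟨n - 1, by omega⟩
      rcases rep with h | h
      · left
        refine ⟨h, ?_⟩
        by_contra hpar
        have hpar' : n' % 2 = 0 := by omega
        have hc := D.uu_succ_cancel i j n'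
        rw [tidx_even i j hpar'] at hc
        have : g * D.sX i = D.uu i j n' := by rw [h, hc]
        have := D.l2_le (Or.inl this)
        omega
      · right
        refine ⟨h, ?_⟩
        by_contra hpar
        have hpar' : n' % 2 = 1 := by omega
        have hc := D.uu_succ_cancel j i n'
        rw [tidx_odd j i hpar'] at hc
        have : g * D.sX i = D.uu j i n' := by rw [h, hc]
        have := D.l2_le (Or.inr this)
        omega
    have happ := D.uu_apply_alpha i j n
    by_cases hab : 4 ≤ (-(D.A i j)) * (-(D.A j i))
    · have ha1 : 1 ≤ -(D.A i j) := by nlinarith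
      have hb1 : 1 ≤ -(D.A j i) := by nlinarith
      have key := pq_nonneg ha1 hb1 hab n
      rcases hend with ⟨hgf, hpar⟩ | ⟨hgf, hpar⟩
      · obtain ⟨h1, h2, -⟩ := key.2 ⟨hpar, hn1⟩
        exact ⟨_, _, h1, h2, by rw [hgf]; exact happ.1⟩
      · obtain ⟨h1, h2, -⟩ := key.1 hpar
        exact ⟨_, _, h1, h2, by rw [hgf]; exact happ.2⟩
    · -- finite dihedral cases
      push_neg at hab
      -- find m and the braid relation
      have hbraid : ∃ m : ℕ, 1 ≤ m ∧ D.uu i j m = D.uu j i m ∧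
          ((m = 2 ∧ (-(D.A i j))*(-(D.A j i)) = 0) ∨ (m = 3 ∧ (-(D.A i j))*(-(D.A j i)) = 1) ∨
           (m = 4 ∧ (-(D.A i j))*(-(D.A j i)) = 2) ∨ (m = 6 ∧ (-(D.A i j))*(-(D.A j i)) = 3)) := by
        by_cases haz : D.A i j = 0
        · have hbz : D.A j i = 0 := D.A_zero_iff i j haz
          exact ⟨2, by norm_num, D.braid00 i j haz hbz, Or.inl ⟨rfl, by rw [haz, hbz]; ring⟩⟩
        · have hbz : D.A j i ≠ 0 := fun h => haz (D.A_zero_iff j i h)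
          have ha1 : 1 ≤ -(D.A i j) := by omega
          have hb1 : 1 ≤ -(D.A j i) := by omega
          have haa : -(D.A i j) ≤ 3 := by nlinarith
          have hbb : -(D.A j i) ≤ 3 := by nlinarith
          have hA3 : D.A i j = -1 ∨ D.A i j = -2 ∨ D.A i j = -3 := by omega
          have hB3 : D.A j i = -1 ∨ D.A j i = -2 ∨ D.A j i = -3 := by omega
          rcases hA3 with hA | hA | hA <;> rcases hB3 with hB | hB | hB <;>
            first
              | (exact ⟨3, by norm_num, D.braid11 i j hA hB, by norm_num [hA, hB]⟩)
              | (exact ⟨4, by norm_num, D.braid12 i j hA hB, by norm_num [hA, hB]⟩)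
              | (exact ⟨4, by norm_num, (D.braid12 j i hB hA).symm, by norm_num [hA, hB]⟩)
              | (exact ⟨6, by norm_num, D.braid13 i j hA hB, by norm_num [hA, hB]⟩)
              | (exact ⟨6, by norm_num, (D.braid13 j i hB hA).symm, by norm_num [hA, hB]⟩)
              | (exfalso; rw [hA, hB] at hab; norm_num at hab)
      obtain ⟨m, hm1, hbr, hmok⟩ := hbraid
      have hbound := D.l2_bound_of_braid hg hlen2 hm1 hbr
      rw [← hn] at hbound
      have hcase := pq_cases hb hn1 hbound hmok
      rcases hend with ⟨hgf, hpar⟩ | ⟨hgf, hpar⟩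
      · obtain ⟨h1, h2⟩ := hcase.1 hpar
        exact ⟨_, _, h1, h2, by rw [hgf]; exact happ.1⟩
      · obtain ⟨h1, h2⟩ := hcase.2 hpar
        exact ⟨_, _, h1, h2, by rw [hgf]; exact happ.2⟩

end KM
namespace KM

variable {I X Y : Type*} [Fintype I] [AddCommGroup X] [AddCommGroup Y] (D : KM I X Y)

open scoped Classical

lemma l2_sX (k : I) (i : I) : D.l2 i k (D.sX k) = 1 := by
  have h1 : D.l2 i k (D.sX k) ≤ 1 := D.l2_le (Or.inr (D.uu_one k i).symm)
  rcases Nat.eq_zero_or_pos (D.l2 i k (D.sX k)) with h | h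
  · exfalso
    have hmem : D.sX k ∈ D.Wpair i k := ⟨1, Or.inr (D.uu_one k i).symm⟩
    have := D.l2_spec hmem
    rw [h, uu_zero, uu_zero] at this
    rcases this with h' | h' <;> exact D.sX_ne_one k h'
  · omega

lemma sX_mem_Wpair (k : I) (i : I) : D.sX k ∈ D.Wpair i k :=
  ⟨1, Or.inr (D.uu_one k i).symm⟩

lemma wlen_mul_Wpair_le {u : AddAut X} (hu : u ∈ D.Wg) {i j : I} {h : AddAut X}
    (hh : h ∈ D.Wpair i j) : D.wlen (u * h) ≤ D.wlen u + D.l2 i j h := by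
  have hWg : h ∈ D.Wg := D.Wpair_sub_Wg hh
  have h1 := D.wlen_mul_le hu hWg
  have h2 : D.wlen h ≤ D.l2 i j h := by
    rcases D.l2_spec hh with h' | h'
    · nth_rewrite 1 [h']; exact D.wlen_uu_le _ _ _
    · nth_rewrite 1 [h']; exact D.wlen_uu_le _ _ _
  omega

/-- Key theorem: if `ℓ(u s_i) ≥ ℓ(u)` then `u α_i` is a nonnegative combination. -/
theorem pos_of_wlen_ge : ∀ N : ℕ, ∀ u : AddAut X, u ∈ D.Wg → D.wlen u ≤ N →
    ∀ i : I, D.wlen u ≤ D.wlen (u * D.sX i) → D.IsNN (u (D.α i)) := by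
  intro N
  induction N using Nat.strong_induction_on with
  | _ N IH =>
  intro u hu hN i hlen
  rcases Nat.eq_zero_or_pos (D.wlen u) with h0 | h0
  · have : u = 1 := D.eq_one_of_wlen_eq_zero hu h0
    subst this
    rw [one_apply']
    exact ⟨fun k => if k = i then 1 else 0, by rw [Finset.sum_eq_single i] <;> simp +contextual⟩
  · -- peel the last letter of a reduced word
    obtain ⟨l, hl, hp⟩ := D.wlen_spec hu
    rcases l.eq_nil_or_concat with rfl | ⟨l', jj, rfl⟩
    · simp at hl; omega
    have hlen' : l'.length + 1 = D.wlen u := by simpa using hl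
    have huj : (l'.map D.sX).prod * D.sX jj = u := by
      rw [← hp, List.concat_eq_append, List.map_append, List.prod_append]; simp
    set uj := (l'.map D.sX).prod with hujdef
    have hujWg : uj ∈ D.Wg := (D.mem_Wg_iff_word uj).mpr ⟨l', rfl⟩
    have hwuj : D.wlen uj ≤ l'.length := D.wlen_le rfl
    have husj : u * D.sX jj = uj := by
      rw [← huj, mul_assoc, sX_mul_self, mul_one]
    -- i ≠ jj
    have hij : i ≠ jj := by
      rintro rfl
      have : D.wlen (u * D.sX i) ≤ l'.length := by rw [husj]; exact hwuj
      omega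
    -- the set of lengths of "prefixes" v with u = v·h, h dihedral, lengths adding up
    set S : Set ℕ := {k | ∃ x : AddAut X, x ∈ D.Wg ∧ x⁻¹ * u ∈ D.Wpair i jj ∧
      D.wlen u = D.wlen x + D.l2 i jj (x⁻¹ * u) ∧ D.wlen x = k} with hS
    have hujS : D.wlen uj ∈ S := by
      have h1 : uj⁻¹ * u = D.sX jj := by rw [← huj]; group
      refine ⟨uj, hujWg, ?_, ?_, rfl⟩
      · rw [h1]; exact D.sX_mem_Wpair jj i
      · rw [h1, D.l2_sX jj i]
        have h2 : D.wlen u ≤ D.wlen uj + 1 := by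
          rw [← huj]
          have h3 := D.wlen_mul_le hujWg (D.sX_mem jj)
          have h4 := D.wlen_sX_le jj
          omega
        omega
    have hSne : S.Nonempty := ⟨_, hujS⟩
    obtain ⟨vv, hvWg, hvpair, hvsum, hvlen⟩ := Nat.sInf_mem hSne
    have hvuj : sInf S ≤ D.wlen uj := Nat.sInf_le hujS
    have hvlt : D.wlen vv < D.wlen u := by omega
    set h := vv⁻¹ * u with hdef
    have hvh : vv * h = u := by rw [hdef]; group
    -- minimality of vv : both s_i and s_jj increase its length
    have claim : ∀ k : I, (k = i ∨ k = jj) → D.wlen vv ≤ D.wlen (vv * D.sX k) := by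
      intro k hk
      by_contra hcon
      push_neg at hcon
      have hx'Wg : vv * D.sX k ∈ D.Wg := Subgroup.mul_mem _ hvWg (D.sX_mem k)
      have hx'inv : (vv * D.sX k)⁻¹ * u = D.sX k * h := by
        rw [mul_inv_rev, D.sX_inv k, mul_assoc, hdef]
      have hpair' : D.sX k * h ∈ D.Wpair i jj := D.sX_mul_mem_Wpair hvpair hk
      have hup : D.wlen u ≤ D.wlen (vv * D.sX k) + D.l2 i jj (D.sX k * h) := by
        have he : (vv * D.sX k) * (D.sX k * h) = u := by
          rw [← hvh, mul_assoc, ← mul_assoc (D.sX k), sX_mul_self, one_mul]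
        calc D.wlen u = D.wlen ((vv * D.sX k) * (D.sX k * h)) := by rw [he]
        _ ≤ _ := D.wlen_mul_Wpair_le hx'Wg hpair'
      have hlow : D.l2 i jj (D.sX k * h) ≤ D.l2 i jj h + 1 := D.l2_sX_mul_le hvpair hk
      have heq : D.wlen u = D.wlen (vv * D.sX k) + D.l2 i jj (D.sX k * h) := by omega
      have : D.wlen (vv * D.sX k) ∈ S :=
        ⟨vv * D.sX k, hx'Wg, by rw [hx'inv]; exact hpair', by rw [hx'inv, heq], rfl⟩
      have := Nat.sInf_le this
      omega
    -- induction hypothesis applies to vv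
    have hNpos : 1 ≤ N := by omega
    have hIH1 : D.IsNN (vv (D.α i)) :=
      IH (N-1) (by omega) vv hvWg (by omega) i (claim i (Or.inl rfl))
    have hIH2 : D.IsNN (vv (D.α jj)) :=
      IH (N-1) (by omega) vv hvWg (by omega) jj (claim jj (Or.inr rfl))
    -- rank-2 hypothesis
    have hl2 : D.l2 i jj h ≤ D.l2 i jj (h * D.sX i) := by
      by_contra hcon
      push_neg at hcon
      have h1 : u * D.sX i = vv * (h * D.sX i) := by rw [← hvh, mul_assoc]
      have h2 : h * D.sX i ∈ D.Wpair i jj := D.mul_sX_mem_Wpair hvpair (Or.inl rfl)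
      have h3 : D.wlen (u * D.sX i) ≤ D.wlen vv + D.l2 i jj (h * D.sX i) := by
        rw [h1]; exact D.wlen_mul_Wpair_le hvWg h2
      omega
    obtain ⟨c, d, hc, hd, hcd⟩ := D.rank2 hij hvpair hl2
    have hfin : u (D.α i) = c • vv (D.α i) + d • vv (D.α jj) := by
      have : u (D.α i) = vv (h (D.α i)) := by rw [← hvh]; rfl
      rw [this, hcd, map_add]
      rw [map_zsmul vv c (D.α i), map_zsmul vv d (D.α jj)]
    rw [hfin]
    exact D.IsNN_comb hIH1 hIH2 hc hd

/-- Dichotomy for images of simple roots. -/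
theorem sX_image_dichotomy {u : AddAut X} (hu : u ∈ D.Wg) (i : I) :
    u (D.α i) ∈ D.PhiPos ∨ u (D.α i) ∈ D.PhiNeg := by
  have hPhi : u (D.α i) ∈ D.Phi := D.Phi_stable hu (D.alpha_mem_Phi i)
  rcases le_or_gt (D.wlen u) (D.wlen (u * D.sX i)) with hle | hlt
  · left
    exact ⟨hPhi, D.pos_of_wlen_ge (D.wlen u) u hu (le_refl _) i hle⟩
  · right
    set u' := u * D.sX i with hu'
    have hu'Wg : u' ∈ D.Wg := Subgroup.mul_mem _ hu (D.sX_mem i)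
    have h1 : u' * D.sX i = u := by rw [hu', mul_assoc, sX_mul_self, mul_one]
    have h2 : D.wlen u' ≤ D.wlen (u' * D.sX i) := by rw [h1]; omega
    have h3 : D.IsNN (u' (D.α i)) := D.pos_of_wlen_ge (D.wlen u') u' hu'Wg (le_refl _) i h2
    have h4 : u' (D.α i) = - u (D.α i) := by
      show u (D.sX i (D.α i)) = _
      rw [D.sX_alpha_self i, map_neg]
    have hPhi' : u' (D.α i) ∈ D.Phi := D.Phi_stable hu'Wg (D.alpha_mem_Phi i)
    show -(u (D.α i)) ∈ D.PhiPos
    rw [← h4]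
    exact ⟨hPhi', h3⟩

/-- Every real root is positive or negative. -/
theorem Phi_dichotomy {x : X} (hx : x ∈ D.Phi) : x ∈ D.PhiPos ∨ x ∈ D.PhiNeg := by
  obtain ⟨⟨g, k⟩, hg, rfl⟩ := hx
  exact D.sX_image_dichotomy hg k

end KM
namespace KM

variable {I X Y : Type*} [Fintype I] [AddCommGroup X] [AddCommGroup Y] (D : KM I X Y)

open scoped Classical

lemma aut_inv_apply (u : AddAut X) (x : X) : u⁻¹ (u x) = x := u.symm_apply_apply x

lemma aut_apply_inv (u : AddAut X) (x : X) : u (u⁻¹ x) = x := u.apply_symm_apply x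

lemma Phi_neg {x : X} (hx : x ∈ D.Phi) : -x ∈ D.Phi := by
  obtain ⟨⟨g, k⟩, hg, rfl⟩ := hx
  refine ⟨⟨g * D.sX k, k⟩, Subgroup.mul_mem _ hg (D.sX_mem k), ?_⟩
  show -(g (D.α k)) = (g * D.sX k) (D.α k)
  rw [mul_apply', D.sX_alpha_self, map_neg]

lemma PhiNeg_def {x : X} : x ∈ D.PhiNeg ↔ -x ∈ D.PhiPos := Iff.rfl

lemma PhiNeg_sub_Phi {x : X} (hx : x ∈ D.PhiNeg) : x ∈ D.Phi := by
  have h2 := D.Phi_neg hx.1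
  simpa using h2

lemma not_pos_and_neg {x : X} (hp : x ∈ D.PhiPos) (hn : x ∈ D.PhiNeg) : False :=
  D.PhiPos_neg_not x hp hn

lemma pos_of_not_neg {x : X} (hx : x ∈ D.Phi) (h : x ∉ D.PhiNeg) : x ∈ D.PhiPos :=
  (D.Phi_dichotomy hx).resolve_right h

lemma neg_of_not_pos {x : X} (hx : x ∈ D.Phi) (h : x ∉ D.PhiPos) : x ∈ D.PhiNeg :=
  (D.Phi_dichotomy hx).resolve_left h

lemma neg_mem_PhiNeg {x : X} (hx : x ∈ D.PhiPos) : -x ∈ D.PhiNeg := by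
  rw [PhiNeg_def, neg_neg]; exact hx

/-- coefficient representation of a root (in either case of the dichotomy). -/
lemma Phi_int_coeffs {x : X} (hx : x ∈ D.Phi) : ∃ d : I → ℤ, x = ∑ t, d t • D.α t := by
  rcases D.Phi_dichotomy hx with hp | hn
  · obtain ⟨c, hc⟩ := hp.2
    exact ⟨fun t => (c t : ℤ), hc⟩
  · obtain ⟨c, hc⟩ := hn.2
    refine ⟨fun t => -(c t : ℤ), ?_⟩
    have : x = -∑ t, ((c t) : ℤ) • D.α t := by rw [← hc, neg_neg]
    rw [this, ← Finset.sum_neg_distrib]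
    congr 1; funext t; rw [neg_smul]

lemma no_double {x : X} (hx : x ∈ D.Phi) (h2x : (2:ℤ) • x ∈ D.Phi) : False := by
  obtain ⟨⟨u, k⟩, hu, hrep⟩ := h2x
  have hki : u⁻¹ ((2:ℤ) • x) = D.α k := by rw [hrep, aut_inv_apply]
  have hx' : u⁻¹ x ∈ D.Phi := D.Phi_stable (Subgroup.inv_mem _ hu) hx
  obtain ⟨d, hd⟩ := D.Phi_int_coeffs hx'
  have hak : D.α k = ∑ t, (2 * d t) • D.α t := by
    rw [← hki, map_zsmul, hd, Finset.smul_sum]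
    congr 1; funext t; rw [smul_smul]
  have hdel : D.α k = ∑ t, ((fun s => if s = k then (1:ℤ) else 0) t) • D.α t := by
    rw [Finset.sum_eq_single k] <;> simp +contextual
  have := congrFun (D.coeff_unique ((hdel.symm.trans hak))) k
  simp at this
  omega

/-- a positive multiple of a root in `Φ₊` that lies in `Φ` and is a simple-root multiple. -/
lemma coroot_pairing {x : X} (hx : x ∈ D.Phi) : ∃ y : Y, D.pr y x = 2 := by
  obtain ⟨⟨u, k⟩, hu, hrep⟩ := hx
  refine ⟨D.actY u (D.αv k), ?_⟩
  rw [pr_actY, hrep, aut_inv_apply, pr_alpha, D.A_diag]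

/-- `Inv(s_i) ⊆ {α i}`. -/
lemma invSet_sX (k : I) : D.invSet (D.sX k) ⊆ {D.α k} := by
  intro b hb
  obtain ⟨hbp, hbn⟩ := hb
  obtain ⟨c, hc⟩ := hbp.2
  obtain ⟨m, hm⟩ := hbn.2
  -- s_k b = b - t α_k ∈ Φ₋
  have hsb : D.sX k b = b - D.pr (D.αv k) b • D.α k := rfl
  set t := D.pr (D.αv k) b with ht
  -- coefficients: c l + m l = t δ_{lk}
  have hsum : ∑ l, ((c l : ℤ) + (m l : ℤ)) • D.α l
      = ∑ l, ((fun s => if s = k then t else 0) l) • D.α l := by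
    have h1 : ∑ l, ((fun s => if s = k then t else 0) l) • D.α l = t • D.α k := by
      rw [Finset.sum_eq_single k] <;> simp +contextual
    rw [h1]
    have h2 : b - t • D.α k = - ∑ l, ((m l) : ℤ) • D.α l := by
      rw [← hm, hsb, neg_neg]
    have h3 : t • D.α k = b + ∑ l, ((m l) : ℤ) • D.α l := by
      rw [sub_eq_iff_eq_add] at h2
      rw [h2]
      abel
    rw [h3, hc, ← Finset.sum_add_distrib]
    congr 1; funext l; rw [← add_smul]
  have hcoeff := D.coeff_unique hsum
  -- all coefficients away from k vanish
  have hck : ∀ l, l ≠ k → c l = 0 := by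
    intro l hl
    have := congrFun hcoeff l
    simp [hl] at this
    omega
  have hbck : b = (c k : ℤ) • D.α k := by
    rw [hc, Finset.sum_eq_single k]
    · intro l _ hl; rw [hck l hl]; simp
    · simp
  -- divisibility
  obtain ⟨y, hy⟩ := D.coroot_pairing hbp.1
  rw [hbck, pr_zsmul] at hy
  have hck0 : c k ≠ 0 := by
    rintro h0
    rw [h0] at hbck
    simp at hbck
    exact D.zero_not_mem_Phi (hbck ▸ hbp.1)
  have hck12 : (c k : ℤ) = 1 ∨ (c k : ℤ) = 2 := by
    rcases le_or_gt (D.pr y (D.α k)) 0 with h | h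
    · exfalso; nlinarith [Int.natCast_nonneg (c k)]
    · have hdvd : (c k : ℤ) ∣ 2 := ⟨D.pr y (D.α k), hy.symm⟩
      have hle : (c k : ℤ) ≤ 2 := Int.le_of_dvd (by norm_num) hdvd
      have h1 : 1 ≤ (c k : ℤ) := by
        have := Int.natCast_nonneg (c k)
        rcases Nat.eq_zero_or_pos (c k) with h' | h'
        · exact absurd h' hck0
        · exact_mod_cast h'
      rcases Int.lt_or_le (c k : ℤ) 2 with h' | h'
      · left; omega
      · right; omega
  rcases hck12 with h1 | h1
  · rw [hbck, h1, one_smul]; rfl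
  · exfalso
    rw [hbck, h1] at hbp
    exact D.no_double (D.alpha_mem_Phi k) hbp.1

lemma invSet_inv_eq (u : AddAut X) :
    D.invSet u⁻¹ = (fun b => -(u b)) '' D.invSet u := by
  ext d
  constructor
  · rintro ⟨hdp, hdn⟩
    refine ⟨-(u⁻¹ d), ⟨hdn, ?_⟩, ?_⟩
    · show u (-(u⁻¹ d)) ∈ D.PhiNeg
      rw [map_neg, aut_apply_inv, PhiNeg_def, neg_neg]
      exact hdp
    · show -(u (-(u⁻¹ d))) = d
      rw [map_neg, aut_apply_inv, neg_neg]
  · rintro ⟨b, ⟨hbp, hbn⟩, rfl⟩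
    constructor
    · show -(u b) ∈ D.PhiPos
      exact hbn
    · show u⁻¹ (-(u b)) ∈ D.PhiNeg
      rw [map_neg, aut_inv_apply, PhiNeg_def, neg_neg]
      exact hbp

lemma len_inv_eq (u : AddAut X) : D.len u⁻¹ = D.len u := by
  rw [len, len, invSet_inv_eq]
  apply Set.ncard_image_of_injective
  intro a b hab
  simp only [neg_inj] at hab
  exact u.injective hab

lemma invSet_finite {u : AddAut X} (hu : u ∈ D.Wg) : (D.invSet u).Finite := by
  induction hu using Subgroup.closure_induction with
  | mem x hx =>
    obtain ⟨k, rfl⟩ := hx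
    exact (Set.finite_singleton (D.α k)).subset (D.invSet_sX k)
  | one =>
    have : D.invSet 1 = ∅ := by
      ext b
      simp only [invSet, Set.mem_setOf_eq, Set.mem_empty_iff_false, iff_false, not_and]
      intro hb hbn
      exact D.not_pos_and_neg hb (by exact hbn)
    rw [this]; exact Set.finite_empty
  | mul x y hx hy ihx ihy =>
    have hsub : D.invSet (x * y) ⊆ D.invSet y ∪ (fun b => y⁻¹ b) '' D.invSet x := by
      rintro b ⟨hbp, hbn⟩
      rw [mul_apply'] at hbn
      have hyb : y b ∈ D.Phi := D.Phi_stable hy hbp.1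
      rcases D.Phi_dichotomy hyb with hp | hn
      · right
        exact ⟨y b, ⟨hp, hbn⟩, by show y⁻¹ (y b) = b; exact aut_inv_apply y b⟩
      · left
        exact ⟨hbp, hn⟩
    exact (ihy.union (ihx.image _)).subset hsub
  | inv x hx ihx =>
    rw [invSet_inv_eq]
    exact ihx.image _

lemma len_finite_spec {u : AddAut X} (hu : u ∈ D.Wg) : (D.invSet u).Finite :=
  D.invSet_finite hu

/-- pairing of a dominant coweight with positive/negative roots. -/
lemma Ypp_pr_nonneg {m : Y} (hm : m ∈ D.Ypp) {b : X} (hb : b ∈ D.PhiPos) :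
    0 ≤ D.pr m b := by
  obtain ⟨c, hc⟩ := hb.2
  rw [hc]
  have : D.pr m (∑ t, ((c t) : ℤ) • D.α t) = ∑ t, (c t : ℤ) * D.pr m (D.α t) := by
    unfold pr
    rw [map_sum]
    congr 1; funext t
    rw [map_zsmul, smul_eq_mul]
  rw [this]
  apply Finset.sum_nonneg
  intro t _
  exact mul_nonneg (Int.natCast_nonneg _) (hm t)

lemma Ypp_pr_nonpos {m : Y} (hm : m ∈ D.Ypp) {b : X} (hb : b ∈ D.PhiNeg) :
    D.pr m b ≤ 0 := by
  have := D.Ypp_pr_nonneg hm (b := -b) hb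
  rw [pr_neg] at this
  omega

/-- the key properties of the reflection associated to a real root. -/
lemma srefl_spec {g : X} (hg : g ∈ D.Phi) :
    ∃ y : Y, D.pr y g = 2 ∧ (∀ x, D.srefl g x = x - D.pr y x • g) ∧ D.srefl g ∈ D.Wg ∧
      (D.srefl g)⁻¹ = D.srefl g := by
  have h : ∃ p : AddAut X × I, p.1 ∈ D.Wg ∧ g = p.1 (D.α p.2) := hg
  obtain ⟨hWg', hrep⟩ := h.choose_spec
  have hs : D.srefl g = h.choose.1 * D.sX h.choose.2 * h.choose.1⁻¹ := by
    unfold srefl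
    rw [dif_pos h]
  set u := h.choose.1
  set k := h.choose.2
  refine ⟨D.actY u (D.αv k), ?_, ?_, ?_, ?_⟩
  · rw [pr_actY, hrep, aut_inv_apply, pr_alpha, D.A_diag]
  · intro x
    rw [hs]
    show u (D.sX k (u⁻¹ x)) = x - D.pr (D.actY u (D.αv k)) x • g
    rw [sX_apply, map_sub, aut_apply_inv, map_zsmul, pr_actY, hrep]
  · rw [hs]
    exact Subgroup.mul_mem _ (Subgroup.mul_mem _ hWg' (D.sX_mem k)) (Subgroup.inv_mem _ hWg')
  · rw [hs]
    rw [mul_inv_rev, mul_inv_rev, D.sX_inv, inv_inv, mul_assoc]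

lemma srefl_mem_Wg {g : X} (hg : g ∈ D.Phi) : D.srefl g ∈ D.Wg :=
  (D.srefl_spec hg).choose_spec.2.2.1

lemma actY_srefl_fix {g : X} (hg : g ∈ D.Phi) {m : Y} (hm : D.pr m g = 0) :
    D.actY (D.srefl g) m = m := by
  obtain ⟨y, hy2, hform, hWg, hinv⟩ := D.srefl_spec hg
  apply D.pairE.injective
  ext x
  show D.pr (D.actY (D.srefl g) m) x = D.pr m x
  rw [pr_actY, hinv, hform x, pr_sub, pr_zsmul, hm]
  ring

end KM
namespace KM

variable {I X Y : Type*} [Fintype I] [AddCommGroup X] [AddCommGroup Y] (D : KM I X Y)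

open scoped Classical

/-- The key length-decrease lemma: if `w g < 0` for `g ∈ Φ₊` then `ℓ(w s_g) < ℓ(w)`. -/
lemma len_mul_srefl_lt {g : X} (hgp : g ∈ D.PhiPos) {w : AddAut X} (hw : w ∈ D.Wg)
    (hwg : w g ∈ D.PhiNeg) : D.len (w * D.srefl g) < D.len w := by
  obtain ⟨y, hy2, hform, hsWg, hsinv⟩ := D.srefl_spec hgp.1
  set s := D.srefl g with hsdef
  have hs2 : s * s = 1 := by nth_rewrite 1 [← hsinv]; exact inv_mul_cancel s
  have hss : ∀ x, s (s x) = x := by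
    intro x
    have : (s * s) x = (1 : AddAut X) x := by rw [hs2]
    simpa [mul_apply', one_apply'] using this
  have hsg : s g = -g := by
    rw [hform, hy2, two_zsmul]; abel
  set T := D.invSet s with hT
  set Nw := D.invSet w with hNw
  set N' := D.invSet (w * s) with hN'
  have hTf : T.Finite := D.invSet_finite hsWg
  have hNwf : Nw.Finite := D.invSet_finite hw
  have hN'f : N'.Finite := D.invSet_finite (Subgroup.mul_mem _ hw hsWg)
  set ι : X → X := fun b => -(s b) with hι
  have hι_inj : Function.Injective ι := by
    intro a b hab
    simp only [hι, neg_inj] at hab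
    exact s.injective hab
  have hιι : ∀ b, ι (ι b) = b := by
    intro b; simp only [hι, map_neg, hss, neg_neg]
  have hgT : g ∈ T := ⟨hgp, by show s g ∈ D.PhiNeg; rw [hsg]; exact D.neg_mem_PhiNeg hgp⟩
  have hgNw : g ∈ Nw := ⟨hgp, hwg⟩
  have hιT : ∀ b ∈ T, ι b ∈ T := by
    rintro b ⟨hbp, hbn⟩
    refine ⟨hbn, ?_⟩
    show s (-(s b)) ∈ D.PhiNeg
    rw [map_neg, hss, PhiNeg_def, neg_neg]
    exact hbp
  have hsT : ∀ b, b ∈ D.PhiPos → b ∉ T → s b ∈ D.PhiPos := by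
    intro b hbp hbT
    refine D.pos_of_not_neg (D.Phi_stable hsWg hbp.1) ?_
    intro hneg
    exact hbT ⟨hbp, hneg⟩
  -- identity 1 : N' off T
  have hid1 : N' \ T = (fun b => s b) '' (Nw \ T) := by
    ext b
    constructor
    · rintro ⟨⟨hbp, hbn⟩, hbT⟩
      rw [mul_apply'] at hbn
      have hsb : s b ∈ D.PhiPos := hsT b hbp hbT
      refine ⟨s b, ⟨⟨hsb, hbn⟩, ?_⟩, hss b⟩
      rintro ⟨-, hTn⟩
      rw [hss] at hTn
      exact D.not_pos_and_neg hbp hTn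
    · rintro ⟨c, ⟨⟨hcp, hcn⟩, hcT⟩, rfl⟩
      have hscp : s c ∈ D.PhiPos := hsT c hcp hcT
      refine ⟨⟨hscp, ?_⟩, ?_⟩
      · show (w * s) (s c) ∈ D.PhiNeg
        rw [mul_apply', hss]
        exact hcn
      · rintro ⟨-, hTn⟩
        rw [hss] at hTn
        exact D.not_pos_and_neg hcp hTn
  -- identity 2 : N' on T
  have hid2 : N' ∩ T = ι '' (T \ Nw) := by
    ext b
    constructor
    · rintro ⟨⟨hbp, hbn⟩, hbT⟩
      rw [mul_apply'] at hbn
      refine ⟨ι b, ⟨hιT b hbT, ?_⟩, hιι b⟩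
      rintro ⟨-, hwn⟩
      have hpos : w (ι b) ∈ D.PhiPos := by
        show w (-(s b)) ∈ D.PhiPos
        rw [map_neg]
        exact hbn
      exact D.not_pos_and_neg hpos hwn
    · rintro ⟨c, ⟨hcT, hcNw⟩, rfl⟩
      have hcp : c ∈ D.PhiPos := hcT.1
      have hwc : w c ∈ D.PhiPos :=
        D.pos_of_not_neg (D.Phi_stable hw hcp.1) (fun hn => hcNw ⟨hcp, hn⟩)
      refine ⟨⟨(hιT c hcT).1, ?_⟩, hιT c hcT⟩
      show (w * s) (ι c) ∈ D.PhiNeg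
      rw [mul_apply']
      show w (s (-(s c))) ∈ D.PhiNeg
      rw [map_neg, hss, map_neg]
      exact D.neg_mem_PhiNeg hwc
  -- counting
  have hcount1 : (N' \ T).ncard = (Nw \ T).ncard := by
    rw [hid1]
    exact Set.ncard_image_of_injective _ s.injective
  have hcount2 : (N' ∩ T).ncard = (T \ Nw).ncard := by
    rw [hid2]
    exact Set.ncard_image_of_injective _ hι_inj
  have hsplit : ∀ (U V : Set X), U.Finite → U.ncard = (U \ V).ncard + (U ∩ V).ncard := by
    intro U V hUf
    rw [← Set.ncard_union_eq ?_ hUf.diff (hUf.inter_of_left _), Set.diff_union_inter]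
    exact Set.disjoint_left.mpr (fun x hx hx2 => hx.2 hx2.2)
  -- the injection estimate
  have hinj : (T \ Nw).ncard ≤ ((T ∩ Nw) \ {g}).ncard := by
    apply Set.ncard_le_ncard_of_injOn ι ?_ (hι_inj.injOn) (hTf.inter_of_left _).diff
    rintro b ⟨hbT, hbNw⟩
    have hbp : b ∈ D.PhiPos := hbT.1
    have hιbp : ι b ∈ D.PhiPos := (hιT b hbT).1
    have hwb : w b ∈ D.PhiPos :=
      D.pos_of_not_neg (D.Phi_stable hw hbp.1) (fun hn => hbNw ⟨hbp, hn⟩)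
    have hbsum : b + ι b = D.pr y b • g := by
      show b + -(s b) = _
      rw [hform b]; abel
    have hcc : 0 ≤ D.pr y b := by
      by_contra hneg
      push_neg at hneg
      apply D.sum_three_pos_ne_zero hbp hιbp hgp (-(D.pr y b)) (by omega)
      rw [show b + ι b + (-(D.pr y b)) • g = (b + ι b) - D.pr y b • g by
        rw [neg_smul]; abel, hbsum, sub_self]
    refine ⟨⟨hιT b hbT, ?_⟩, ?_⟩
    · -- ι b ∈ Nw
      by_contra hwn
      have hwn' : w (ι b) ∉ D.PhiNeg := fun hn => hwn ⟨hιbp, hn⟩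
      have hwιb : w (ι b) ∈ D.PhiPos :=
        D.pos_of_not_neg (D.Phi_stable hw hιbp.1) hwn'
      apply D.sum_three_pos_ne_zero hwb hwιb (show -(w g) ∈ D.PhiPos from hwg) _ hcc
      have hsum2 : w b + w (ι b) = D.pr y b • w g := by
        rw [← map_add, hbsum, map_zsmul]
      rw [hsum2, smul_neg]
      abel
    · -- ι b ≠ g
      intro hmem
      have : ι b = g := hmem
      have : b = ι g := by rw [← this, hιι]
      have hbg : b = g := by rw [this]; show -(s g) = g; rw [hsg, neg_neg]
      exact hbNw (hbg ▸ hgNw)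
  have hgTN : g ∈ T ∩ Nw := ⟨hgT, hgNw⟩
  have hA1 : 1 ≤ (T ∩ Nw).ncard := by
    have := (Set.ncard_pos (hTf.inter_of_left _)).mpr ⟨g, hgTN⟩
    omega
  have hA2 : ((T ∩ Nw) \ {g}).ncard = (T ∩ Nw).ncard - 1 :=
    Set.ncard_diff_singleton_of_mem hgTN
  have e1 : D.len (w * s) = (Nw \ T).ncard + (T \ Nw).ncard := by
    rw [len, ← hN', hsplit N' T hN'f, hcount1, hcount2]
  have e2 : D.len w = (Nw \ T).ncard + (Nw ∩ T).ncard := by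
    rw [len, ← hNw, hsplit Nw T hNwf]
  have e3 : (Nw ∩ T).ncard = (T ∩ Nw).ncard := by rw [Set.inter_comm]
  omega

end KM

/-- for `λ = v(λ^{++}) ∈ Y⁺` and `w ∈ Wᵛ`, the signed count of inversions
equals `ℓ_{v^λ}(w) = ℓ((v^λ)⁻¹w) − ℓ(v^λ)`, and consequently
`ℓᵃ(π^λ w) = 2ht(λ^{++}) + ℓ_{v^λ}(w)`. -/
theorem statement16 {I X Y : Type*} [Fintype I] [AddCommGroup X] [AddCommGroup Y]
    (D : KM I X Y)
    (Λ : I → X) (hΛ : D.IsFundWeights Λ)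
    (lam : Y) (hlam : lam ∈ D.Yplus)
    (v : AddAut X) (hv : v ∈ D.Wg) (hlv : lam = D.actY v (D.dompp lam))
    (w : AddAut X) (hw : w ∈ D.Wg) :
    (({x | x ∈ D.invSet (w⁻¹) ∧ 0 ≤ D.pr lam x}).ncard : ℤ) -
        (({x | x ∈ D.invSet (w⁻¹) ∧ D.pr lam x < 0}).ncard : ℤ) =
      D.rlen (D.vmin lam) w ∧
    D.rlen (D.vmin lam) w = (D.len ((D.vmin lam)⁻¹ * w) : ℤ) - (D.len (D.vmin lam) : ℤ) ∧
    D.alen Λ (lam, w) = 2 * D.ht Λ (D.dompp lam) + D.rlen (D.vmin lam) w := by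
  classical
  -- the dominant representative
  have hlam' : ∃ p : AddAut X × Y, p.1 ∈ D.Wg ∧ p.2 ∈ D.Ypp ∧ lam = D.actY p.1 p.2 := hlam
  have hdomeq : D.dompp lam = hlam'.choose.2 := by unfold KM.dompp; rw [dif_pos hlam']
  obtain ⟨hWg0, hYpp0, hrep0⟩ := hlam'.choose_spec
  have hmuYpp : D.dompp lam ∈ D.Ypp := by rw [hdomeq]; exact hYpp0
  have hmuact : ∃ u, u ∈ D.Wg ∧ D.actY u (D.dompp lam) = lam :=
    ⟨hlam'.choose.1, hWg0, by rw [hdomeq, ← hrep0]⟩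
  -- existence of a minimal-length element
  have hvex : ∃ w0 : AddAut X, w0 ∈ D.Wg ∧ D.actY w0 (D.dompp lam) = lam ∧
      ∀ w' : AddAut X, w' ∈ D.Wg → D.actY w' (D.dompp lam) = lam →
        D.len w0 ≤ D.len w' := by
    obtain ⟨u0, hu0, hau0⟩ := hmuact
    have hSLne : {n : ℕ | ∃ w0, (w0 ∈ D.Wg ∧ D.actY w0 (D.dompp lam) = lam) ∧
        D.len w0 = n}.Nonempty := ⟨D.len u0, u0, ⟨hu0, hau0⟩, rfl⟩
    obtain ⟨w0, ⟨hw0g, hw0a⟩, hw0l⟩ := Nat.sInf_mem hSLne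
    refine ⟨w0, hw0g, hw0a, fun w' hw' ha' => ?_⟩
    have hmem : D.len w' ∈ {n : ℕ | ∃ w0, (w0 ∈ D.Wg ∧ D.actY w0 (D.dompp lam) = lam) ∧
        D.len w0 = n} := ⟨w', ⟨hw', ha'⟩, rfl⟩
    rw [hw0l]
    exact Nat.sInf_le hmem
  have hv0spec : D.vmin lam ∈ D.Wg ∧ D.actY (D.vmin lam) (D.dompp lam) = lam ∧
      ∀ w', w' ∈ D.Wg → D.actY w' (D.dompp lam) = lam →
        D.len (D.vmin lam) ≤ D.len w' := by
    unfold KM.vmin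
    rw [dif_pos hvex]
    exact hvex.choose_spec
  obtain ⟨hv0g, hv0a, hv0min⟩ := hv0spec
  set v0 := D.vmin lam with hv0def
  -- characterization of the inversion set of v0⁻¹
  have hA : D.invSet v0⁻¹ = {b | b ∈ D.PhiPos ∧ D.pr lam b < 0} := by
    ext b
    constructor
    · rintro ⟨hbp, hbn⟩
      refine ⟨hbp, ?_⟩
      have hpr : D.pr lam b = D.pr (D.dompp lam) (v0⁻¹ b) := by
        conv_lhs => rw [← hv0a]
        rw [KM.pr_actY]
      have hle : D.pr lam b ≤ 0 := by
        rw [hpr]; exact D.Ypp_pr_nonpos hmuYpp hbn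
      rcases lt_or_eq_of_le hle with h | h
      · exact h
      · exfalso
        have hgamp : -(v0⁻¹ b) ∈ D.PhiPos := hbn
        have hmugam : D.pr (D.dompp lam) (-(v0⁻¹ b)) = 0 := by
          rw [KM.pr_neg, ← hpr, h]
          ring
        have hfix : D.actY (D.srefl (-(v0⁻¹ b))) (D.dompp lam) = D.dompp lam :=
          D.actY_srefl_fix hgamp.1 hmugam
        have hsWg := D.srefl_mem_Wg hgamp.1
        have hact : D.actY (v0 * D.srefl (-(v0⁻¹ b))) (D.dompp lam) = lam := by
          rw [KM.actY_mul, hfix, hv0a]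
        have hmin := hv0min _ (Subgroup.mul_mem _ hv0g hsWg) hact
        have hlt : D.len (v0 * D.srefl (-(v0⁻¹ b))) < D.len v0 := by
          apply D.len_mul_srefl_lt hgamp hv0g
          have hvg : v0 (-(v0⁻¹ b)) = -b := by rw [map_neg, KM.aut_apply_inv]
          rw [hvg]
          exact D.neg_mem_PhiNeg hbp
        omega
    · rintro ⟨hbp, hblt⟩
      refine ⟨hbp, ?_⟩
      have hbinv : v0⁻¹ b ∈ D.Phi := D.Phi_stable (Subgroup.inv_mem _ hv0g) hbp.1
      rcases D.Phi_dichotomy hbinv with hp | hn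
      · exfalso
        have hpr : D.pr lam b = D.pr (D.dompp lam) (v0⁻¹ b) := by
          conv_lhs => rw [← hv0a]
          rw [KM.pr_actY]
        have h2 := D.Ypp_pr_nonneg hmuYpp hp
        omega
      · exact hn
  -- conjunct 1
  have hPeq : {x | x ∈ D.invSet (w⁻¹) ∧ 0 ≤ D.pr lam x}
      = D.invSet w⁻¹ \ D.invSet v0⁻¹ := by
    ext b
    rw [hA]
    constructor
    · rintro ⟨hb1, hb2⟩
      exact ⟨hb1, fun hc => by have := hc.2; omega⟩
    · rintro ⟨hb1, hb2⟩
      refine ⟨hb1, ?_⟩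
      by_contra hneg
      push_neg at hneg
      exact hb2 ⟨hb1.1, hneg⟩
  have hQeq : {x | x ∈ D.invSet (w⁻¹) ∧ D.pr lam x < 0}
      = D.invSet w⁻¹ ∩ D.invSet v0⁻¹ := by
    ext b
    rw [hA]
    constructor
    · rintro ⟨hb1, hb2⟩
      exact ⟨hb1, hb1.1, hb2⟩
    · rintro ⟨hb1, hb2⟩
      exact ⟨hb1, hb2.2⟩
  have c1 : (({x | x ∈ D.invSet (w⁻¹) ∧ 0 ≤ D.pr lam x}).ncard : ℤ) -
      (({x | x ∈ D.invSet (w⁻¹) ∧ D.pr lam x < 0}).ncard : ℤ) = D.rlen v0 w := by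
    rw [KM.rlen, hPeq, hQeq]
  -- conjunct 2
  have hfw : (D.invSet w⁻¹).Finite := D.invSet_finite (Subgroup.inv_mem _ hw)
  have hfv : (D.invSet v0⁻¹).Finite := D.invSet_finite (Subgroup.inv_mem _ hv0g)
  have hsplit : ∀ (U V : Set X), U.Finite → U.ncard = (U \ V).ncard + (U ∩ V).ncard := by
    intro U V hUf
    rw [← Set.ncard_union_eq ?_ hUf.diff (hUf.inter_of_left _), Set.diff_union_inter]
    exact Set.disjoint_left.mpr (fun x hx hx2 => hx.2 hx2.2)
  have hbij : D.invSet (w⁻¹ * v0) =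
      (fun d => v0⁻¹ d) '' (D.invSet w⁻¹ \ D.invSet v0⁻¹) ∪
      (fun d => -(v0⁻¹ d)) '' (D.invSet v0⁻¹ \ D.invSet w⁻¹) := by
    ext b
    constructor
    · rintro ⟨hbp, hbn⟩
      rw [KM.mul_apply'] at hbn
      have hv0b : v0 b ∈ D.Phi := D.Phi_stable hv0g hbp.1
      rcases D.Phi_dichotomy hv0b with hp | hn
      · left
        refine ⟨v0 b, ⟨⟨hp, hbn⟩, ?_⟩, ?_⟩
        · rintro ⟨-, hneg⟩
          rw [KM.aut_inv_apply] at hneg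
          exact D.not_pos_and_neg hbp hneg
        · show v0⁻¹ (v0 b) = b
          exact KM.aut_inv_apply v0 b
      · right
        refine ⟨-(v0 b), ⟨⟨hn, ?_⟩, ?_⟩, ?_⟩
        · show v0⁻¹ (-(v0 b)) ∈ D.PhiNeg
          rw [map_neg, KM.aut_inv_apply, KM.PhiNeg_def, neg_neg]
          exact hbp
        · rintro ⟨-, hneg⟩
          have : w⁻¹ (-(v0 b)) ∈ D.PhiPos := by
            rw [map_neg]
            exact hbn
          exact D.not_pos_and_neg this hneg
        · show -(v0⁻¹ (-(v0 b))) = b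
          rw [map_neg, KM.aut_inv_apply, neg_neg]
    · rintro (⟨d, ⟨⟨hdp, hdn⟩, hdnv⟩, rfl⟩ | ⟨d, ⟨⟨hdp, hdn⟩, hdnw⟩, rfl⟩)
      · have hvd : v0⁻¹ d ∈ D.Phi := D.Phi_stable (Subgroup.inv_mem _ hv0g) hdp.1
        have hvdp : v0⁻¹ d ∈ D.PhiPos :=
          D.pos_of_not_neg hvd (fun hneg => hdnv ⟨hdp, hneg⟩)
        refine ⟨hvdp, ?_⟩
        show (w⁻¹ * v0) (v0⁻¹ d) ∈ D.PhiNeg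
        rw [KM.mul_apply', KM.aut_apply_inv]
        exact hdn
      · have hvdn : v0⁻¹ d ∈ D.PhiNeg := hdn
        have hwd : w⁻¹ d ∈ D.Phi := D.Phi_stable (Subgroup.inv_mem _ hw) hdp.1
        have hwdp : w⁻¹ d ∈ D.PhiPos :=
          D.pos_of_not_neg hwd (fun hneg => hdnw ⟨hdp, hneg⟩)
        refine ⟨hvdn, ?_⟩
        show (w⁻¹ * v0) (-(v0⁻¹ d)) ∈ D.PhiNeg
        rw [KM.mul_apply', map_neg, KM.aut_apply_inv, map_neg, KM.PhiNeg_def, neg_neg]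
        exact hwdp
  have hinj1 : Function.Injective (fun d : X => v0⁻¹ d) := fun a b hab => by
    simpa using (v0⁻¹ : AddAut X).injective hab
  have hinj2 : Function.Injective (fun d : X => -(v0⁻¹ d)) := fun a b hab => by
    simp only [neg_inj] at hab
    simpa using (v0⁻¹ : AddAut X).injective hab
  have hdisj : Disjoint ((fun d => v0⁻¹ d) '' (D.invSet w⁻¹ \ D.invSet v0⁻¹))
      ((fun d => -(v0⁻¹ d)) '' (D.invSet v0⁻¹ \ D.invSet w⁻¹)) := by
    rw [Set.disjoint_left]
    rintro x ⟨d1, ⟨hd1, -⟩, rfl⟩ ⟨d2, ⟨hd2, -⟩, heq⟩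
    have hdd : d2 = -d1 := by
      have := congrArg v0 heq
      rw [map_neg, KM.aut_apply_inv, KM.aut_apply_inv] at this
      have h2 := congrArg Neg.neg this
      rw [neg_neg] at h2
      exact h2
    rw [hdd] at hd2
    exact D.not_pos_and_neg hd2.1 (D.neg_mem_PhiNeg hd1.1)
  have hlen1 : D.len (v0⁻¹ * w) = D.len (w⁻¹ * v0) := by
    have h1 : (w⁻¹ * v0)⁻¹ = v0⁻¹ * w := by rw [mul_inv_rev, inv_inv]
    rw [← h1, D.len_inv_eq]
  have hcount : D.len (w⁻¹ * v0) = (D.invSet w⁻¹ \ D.invSet v0⁻¹).ncard +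
      (D.invSet v0⁻¹ \ D.invSet w⁻¹).ncard := by
    rw [KM.len, hbij, Set.ncard_union_eq hdisj (hfw.diff.image _) (hfv.diff.image _),
      Set.ncard_image_of_injective _ hinj1, Set.ncard_image_of_injective _ hinj2]
  have hlenv0 : D.len v0 = (D.invSet v0⁻¹ \ D.invSet w⁻¹).ncard +
      (D.invSet v0⁻¹ ∩ D.invSet w⁻¹).ncard := by
    rw [← D.len_inv_eq v0, KM.len, hsplit (D.invSet v0⁻¹) (D.invSet w⁻¹) hfv]
  have hic : (D.invSet v0⁻¹ ∩ D.invSet w⁻¹).ncard =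
      (D.invSet w⁻¹ ∩ D.invSet v0⁻¹).ncard := by rw [Set.inter_comm]
  have c2 : D.rlen v0 w = (D.len (v0⁻¹ * w) : ℤ) - (D.len v0 : ℤ) := by
    rw [KM.rlen, hlen1, hcount, hlenv0]
    push_cast
    rw [← hic]
    ring
  refine ⟨c1, c2, ?_⟩
  -- conjunct 3
  show 2 * D.ht Λ (D.dompp (lam, w).1) +
      ((({x | x ∈ D.invSet (lam, w).2⁻¹ ∧ 0 ≤ D.pr (lam, w).1 x}).ncard : ℤ) -
        (({x | x ∈ D.invSet (lam, w).2⁻¹ ∧ D.pr (lam, w).1 x < 0}).ncard : ℤ)) = _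
  have : ((({x | x ∈ D.invSet (w⁻¹) ∧ 0 ≤ D.pr lam x}).ncard : ℤ) -
        (({x | x ∈ D.invSet (w⁻¹) ∧ D.pr lam x < 0}).ncard : ℤ)) = D.rlen v0 w := c1
  rw [this]
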